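/- Let μ ∈ ℂ, ν = π/ℓ, and φ(z) = (z−μ)e^{2izℓ} − (z+μ), φ₀(z) = z(e^{2izℓ} − 1). For all sufficiently large n ∈ ℕ, one has |φ(z) − φ₀(z)| < |φ₀(z)| for all z on the circle |z − nν| = ν/6, and consequently φ has exactly one zero (counted with multiplicity) in the disk D(nν, ν/6). -/

import Mathlib

open Complex

lemma aux_tri1 (a b : ℂ) : ‖a‖ - ‖b‖ ≤ ‖a - b‖ := by
  simpa using norm_sub_norm_le a b

lemma aux_log_lipschitz {w₁ w₂ : ℂ} (h₁ : ‖w₁ - 1‖ ≤ 1/2)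
    (h₂ : ‖w₂ - 1‖ ≤ 1/2) :
    ‖Complex.log w₁ - Complex.log w₂‖ ≤ 2 * ‖w₁ - w₂‖ := by
  have hconv : Convex ℝ (Metric.closedBall (1:ℂ) (1/2)) := convex_closedBall _ _
  have hre : ∀ w ∈ Metric.closedBall (1:ℂ) (1/2), (1:ℝ)/2 ≤ w.re := by
    intro w hw
    rw [Metric.mem_closedBall, Complex.dist_eq] at hw
    have := Complex.abs_re_le_norm (w - 1)
    have h2 : |(w - 1).re| ≤ 1/2 := le_trans this hw
    rw [Complex.sub_re, Complex.one_re] at h2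
    cases' abs_le.mp h2 with hl hr
    linarith
  have hmem : ∀ w ∈ Metric.closedBall (1:ℂ) (1/2), (1:ℝ)/2 ≤ ‖w‖ := by
    intro w hw
    have := hre w hw
    have := Complex.abs_re_le_norm w
    have h3 : w.re ≤ |w.re| := le_abs_self _
    linarith
  have hd : ∀ w ∈ Metric.closedBall (1:ℂ) (1/2),
      HasDerivWithinAt Complex.log w⁻¹ (Metric.closedBall (1:ℂ) (1/2)) w := by
    intro w hw
    refine (Complex.hasDerivAt_log ?_).hasDerivWithinAt
    exact Or.inl (by linarith [hre w hw])
  have hb : ∀ w ∈ Metric.closedBall (1:ℂ) (1/2), ‖(w)⁻¹‖ ≤ 2 := by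
    intro w hw
    have h1 := hmem w hw
    have h0 : (0:ℝ) < ‖w‖ := by linarith
    rw [norm_inv, inv_le_comm₀ h0 (by norm_num : (0:ℝ) < 2)]
    linarith
  have h₁' : w₁ ∈ Metric.closedBall (1:ℂ) (1/2) := by
    rw [Metric.mem_closedBall, Complex.dist_eq]; exact h₁
  have h₂' : w₂ ∈ Metric.closedBall (1:ℂ) (1/2) := by
    rw [Metric.mem_closedBall, Complex.dist_eq]; exact h₂
  have := hconv.norm_image_sub_le_of_norm_hasDerivWithin_le hd hb h₂' h₁'
  simpa using this

lemma aux_exp_lb {u : ℂ} (hu : ‖u‖ = Real.pi / 3) :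
    1/4 ≤ ‖Complex.exp u - 1‖ := by
  have hpi1 := Real.pi_gt_d6
  have hpi2 := Real.pi_lt_d2
  have h2 : ‖u/2‖ = Real.pi/6 := by
    rw [norm_div, hu]; norm_num; ring
  have h2le : ‖u/2‖ ≤ 1 := by rw [h2]; linarith
  have hb := Complex.norm_exp_sub_one_sub_id_le h2le
  rw [h2] at hb
  have key : Complex.exp u - 1 = (Complex.exp (u/2) - 1) * (Complex.exp (u/2) + 1) := by
    have he : Complex.exp (u/2) * Complex.exp (u/2) = Complex.exp u := by
      rw [← Complex.exp_add]; ring_nf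
    calc Complex.exp u - 1 = Complex.exp (u/2) * Complex.exp (u/2) - 1 := by rw [he]
      _ = (Complex.exp (u/2) - 1) * (Complex.exp (u/2) + 1) := by ring
  rw [key, norm_mul]
  set t := Real.pi/6 with ht
  have ht1 : (0.523:ℝ) < t := by rw [ht]; linarith
  have ht2 : t < 0.525 := by rw [ht]; linarith
  have lo : t - t^2 ≤ ‖Complex.exp (u/2) - 1‖ := by
    have htri := aux_tri1 (u/2) ((u/2) - (Complex.exp (u/2) - 1))
    have e1 : (u/2) - ((u/2) - (Complex.exp (u/2) - 1)) = Complex.exp (u/2) - 1 := by ring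
    have e2 : ‖(u/2) - (Complex.exp (u/2) - 1)‖
        = ‖Complex.exp (u/2) - 1 - u/2‖ := by
      rw [← norm_neg]; ring_nf
    rw [e1, e2, h2] at htri
    linarith
  have lo2 : 2 - (t + t^2) ≤ ‖Complex.exp (u/2) + 1‖ := by
    have hi : ‖Complex.exp (u/2) - 1‖ ≤ t + t^2 := by
      have htri : ‖Complex.exp (u/2) - 1‖
          ≤ ‖Complex.exp (u/2) - 1 - u/2‖ + ‖u/2‖ := by
        simpa using norm_add_le (Complex.exp (u/2) - 1 - u/2) (u/2)
      rw [h2] at htri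
      linarith
    have htri := aux_tri1 (2:ℂ) (1 - Complex.exp (u/2))
    have e1 : (2:ℂ) - (1 - Complex.exp (u/2)) = Complex.exp (u/2) + 1 := by ring
    have e2 : ‖1 - Complex.exp (u/2)‖ = ‖Complex.exp (u/2) - 1‖ := by
      rw [← norm_neg]; ring_nf
    have e3 : ‖(2:ℂ)‖ = 2 := by
      simpa using Complex.norm_two
    rw [e1, e2, e3] at htri
    linarith
  have f2 : (0:ℝ) < 2 - (t + t^2) := by nlinarith
  have hA : (0.249:ℝ) ≤ t - t^2 := by nlinarith [sq_nonneg (t - 0.525)]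
  have hB : (1.199:ℝ) ≤ 2 - (t + t^2) := by nlinarith [sq_nonneg (t - 0.525)]
  have hprod : 1/4 ≤ (t - t^2) * (2 - (t + t^2)) := by nlinarith
  calc (1:ℝ)/4 ≤ (t - t^2) * (2 - (t + t^2)) := hprod
    _ ≤ ‖Complex.exp (u/2) - 1‖ * ‖Complex.exp (u/2) + 1‖ :=
        mul_le_mul lo lo2 f2.le (norm_nonneg _)

lemma aux_exp_eq_log {u w : ℂ} (hu : ‖u‖ ≤ Real.pi/3)
    (hw : ‖w - 1‖ ≤ 1/2) (h : Complex.exp u = w) : u = Complex.log w := by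
  have hpi1 := Real.pi_gt_d6
  have hpi2 := Real.pi_lt_d2
  have hwne : w ≠ 0 := by
    intro h0
    rw [h0] at hw
    simp at hw
    norm_num at hw
  have hlog : ‖Complex.log w‖ ≤ 1 := by
    have := aux_log_lipschitz hw (by norm_num : ‖(1:ℂ) - 1‖ ≤ 1/2)
    rw [Complex.log_one, sub_zero] at this
    calc ‖Complex.log w‖ ≤ 2 * ‖w - 1‖ := this
      _ ≤ 2 * (1/2) := by linarith
      _ = 1 := by norm_num
  have hexp1 : Complex.exp (u - Complex.log w) = 1 := by
    rw [Complex.exp_sub, h, Complex.exp_log hwne, div_self hwne]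
  obtain ⟨k, hk⟩ := Complex.exp_eq_one_iff.mp hexp1
  have habs : ‖u - Complex.log w‖ ≤ Real.pi/3 + 1 := by
    calc ‖u - Complex.log w‖
        ≤ ‖u‖ + ‖Complex.log w‖ := by
          simpa using norm_sub_le u (Complex.log w)
      _ ≤ Real.pi/3 + 1 := by linarith
  have hk0 : k = 0 := by
    by_contra hk0
    have h1 : (1:ℝ) ≤ |(k:ℝ)| := by
      have : (1:ℤ) ≤ |k| := Int.one_le_abs hk0
      exact_mod_cast this
    have habs2 : ‖(k:ℂ) * (2 * Real.pi * I)‖ = |(k:ℝ)| * (2 * Real.pi) := by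
      rw [norm_mul, norm_mul, norm_mul]
      rw [Complex.norm_intCast, Complex.norm_two, Complex.norm_real, Real.norm_eq_abs, Complex.norm_I,
        abs_of_pos Real.pi_pos]
      ring
    rw [hk, habs2] at habs
    nlinarith
  rw [hk0] at hk
  simp at hk
  exact sub_eq_zero.mp hk

set_option maxHeartbeats 1600000 in
/-- Rouché estimate: for `n` large enough, `|φ(z) - φ₀(z)| < |φ₀(z)|` on the
circle `|z - nν| = ν/6` (`ν = π/ℓ`), and consequently `φ` has exactly one
(simple) zero in the disk `D(nν, ν/6)`. -/
theorem rouche_phi (ℓ : ℝ) (hℓ : 0 < ℓ) (μ : ℂ) (ν : ℝ) (hν : ν = Real.pi / ℓ)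
    (φ φ₀ : ℂ → ℂ)
    (hφ : φ = fun w => (w - μ) * exp (2 * I * w * ℓ) - (w + μ))
    (hφ₀ : φ₀ = fun w => w * (exp (2 * I * w * ℓ) - 1)) :
    ∃ N : ℕ, ∀ n : ℕ, N ≤ n →
      (∀ z : ℂ, ‖z - (n : ℂ) * ν‖ = ν / 6 →
        ‖φ z - φ₀ z‖ < ‖φ₀ z‖)
      ∧ (∃! z : ℂ, ‖z - (n : ℂ) * ν‖ < ν / 6 ∧ φ z = 0)
      ∧ (∀ z : ℂ, ‖z - (n : ℂ) * ν‖ < ν / 6 → φ z = 0 → deriv φ z ≠ 0) := by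
  have hπ := Real.pi_pos
  have hν0 : 0 < ν := by rw [hν]; positivity
  have hℓν : ℓ * ν = Real.pi := by rw [hν]; field_simp
  set m := ‖μ‖ with hm
  have hm0 : 0 ≤ m := norm_nonneg μ
  set C := Real.exp (Real.pi/3) + 1 with hC
  have hC0 : 0 < C := by rw [hC]; positivity
  set T : ℝ := 2 + 4*m*C + 4*m + 4*m/ℓ + 12*m/(ℓ*ν) + m/ℓ with hT
  obtain ⟨N, hNgt⟩ := exists_nat_gt ((ν/6 + m + T)/ν)
  refine ⟨N, fun n hn => ?_⟩
  have hnν : ν/6 + m + T < (n:ℝ)*ν := by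
    have h1 : (ν/6 + m + T)/ν * ν < (N:ℝ) * ν := mul_lt_mul_of_pos_right hNgt hν0
    rw [div_mul_cancel₀ _ (ne_of_gt hν0)] at h1
    have h2 : (N:ℝ) * ν ≤ (n:ℝ)*ν := by
      have : (N:ℝ) ≤ (n:ℝ) := by exact_mod_cast hn
      exact mul_le_mul_of_nonneg_right this hν0.le
    linarith
  set D : ℝ := (n:ℝ)*ν - ν/6 - m with hD
  have hTD : T ≤ D := by rw [hD]; linarith
  have nn1 : 0 ≤ 4*m*C := by positivity
  have nn2 : 0 ≤ 4*m/ℓ := by positivity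
  have nn3 : 0 ≤ 12*m/(ℓ*ν) := by positivity
  have nn4 : 0 ≤ m/ℓ := by positivity
  clear_value m C T D
  have hD2 : 2 ≤ D := by rw [hT] at hTD; linarith
  have hD0 : 0 < D := by linarith
  have hD4m : 4*m ≤ D := by rw [hT] at hTD; linarith
  have hDC : 4*m*C + 2 ≤ D := by rw [hT] at hTD; linarith
  have hDl : 4*m/ℓ + 2 ≤ D := by rw [hT] at hTD; linarith
  have hDlv : 12*m/(ℓ*ν) + 2 ≤ D := by rw [hT] at hTD; linarith
  have hDml : m/ℓ + 2 ≤ D := by rw [hT] at hTD; linarith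
  set a : ℂ := (n:ℂ) * ν with ha
  clear_value a
  have habs_a : ‖a‖ = (n:ℝ)*ν := by
    rw [ha, norm_mul, Complex.norm_natCast, Complex.norm_real, Real.norm_eq_abs, abs_of_pos hν0]
  have hℓ0' : (ℓ:ℂ) ≠ 0 := Complex.ofReal_ne_zero.mpr (ne_of_gt hℓ)
  have hexp_a : Complex.exp (2*I*a*ℓ) = 1 := by
    have he : (2*I*a*(ℓ:ℂ)) = (n:ℂ) * (2*Real.pi*I) := by
      rw [ha]
      have hc : (ν:ℂ) = (Real.pi:ℂ) / (ℓ:ℂ) := by rw [hν]; push_cast; ring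
      rw [hc]; field_simp
    rw [he, Complex.exp_nat_mul, Complex.exp_two_pi_mul_I, one_pow]
  have hexp_per : ∀ z : ℂ, Complex.exp (2*I*z*ℓ) = Complex.exp (2*I*(z-a)*ℓ) := by
    intro z
    rw [← mul_one (Complex.exp (2*I*(z-a)*ℓ)), ← hexp_a, ← Complex.exp_add]
    ring_nf
  have hu_abs : ∀ z : ℂ, ‖2*I*(z-a)*ℓ‖ = 2*ℓ*‖z-a‖ := by
    intro z
    rw [norm_mul, norm_mul, norm_mul, Complex.norm_two, Complex.norm_I, Complex.norm_real, Real.norm_eq_abs,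
      abs_of_pos hℓ]
    ring
  have hπ3 : 2*ℓ*(ν/6) = Real.pi/3 := by
    have he : 2*ℓ*(ν/6) = ℓ*ν/3 := by ring
    rw [he, hℓν]
  have habs_z : ∀ z : ℂ, ‖z - a‖ ≤ ν/6 → (n:ℝ)*ν - ν/6 ≤ ‖z‖ := by
    intro z hz
    have h1 := aux_tri1 a (a - z)
    have e1 : a - (a - z) = z := by ring
    have e2 : ‖a - z‖ = ‖z - a‖ := by
      rw [← norm_neg]; ring_nf
    rw [e1, e2, habs_a] at h1
    linarith
  have hzμ : ∀ z : ℂ, ‖z - a‖ ≤ ν/6 → D ≤ ‖z - μ‖ := by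
    intro z hz
    have h1 := habs_z z hz
    have h2 := aux_tri1 z μ
    rw [← hm] at h2
    rw [hD]
    linarith
  have hzμne : ∀ z : ℂ, ‖z - a‖ ≤ ν/6 → z - μ ≠ 0 := by
    intro z hz h0
    have h1 := hzμ z hz
    rw [h0] at h1
    simp at h1
    linarith
  set g : ℂ → ℂ := fun z => 1 + 2*μ/(z - μ) with hg
  clear_value g
  have hg1 : ∀ z : ℂ, ‖z - a‖ ≤ ν/6 →
      ‖g z - 1‖ ≤ 2*m/D ∧ ‖g z - 1‖ ≤ 1/2 := by
    intro z hz
    have h1 : g z - 1 = 2*μ/(z-μ) := by rw [hg]; ring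
    have h2 : ‖g z - 1‖ = 2*m/‖z-μ‖ := by
      rw [h1, norm_div, norm_mul, Complex.norm_two, hm]
    have h3 := hzμ z hz
    have h4 : 2*m/‖z-μ‖ ≤ 2*m/D :=
      div_le_div_of_nonneg_left (by linarith) hD0 h3
    have h5 : 2*m/D ≤ 1/2 := by
      rw [div_le_iff₀ hD0]; linarith
    exact ⟨by rw [h2]; exact h4, by rw [h2]; linarith⟩
  have hgne : ∀ z : ℂ, ‖z - a‖ ≤ ν/6 → g z ≠ 0 := by
    intro z hz h0
    have h1 := (hg1 z hz).2
    rw [h0] at h1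
    simp at h1
    norm_num at h1
  have hphi_iff : ∀ z : ℂ, ‖z - a‖ ≤ ν/6 →
      (φ z = 0 ↔ Complex.exp (2*I*(z-a)*ℓ) = g z) := by
    intro z hz
    have hne := hzμne z hz
    have hfac : φ z = (z - μ) * (Complex.exp (2*I*z*ℓ) - g z) := by
      rw [hφ, hg]
      simp only
      field_simp
      ring
    rw [hfac, hexp_per z]
    constructor
    · intro h
      rcases mul_eq_zero.mp h with h | h
      · exact absurd h hne
      · exact sub_eq_zero.mp h
    · intro h
      rw [h, sub_self, mul_zero]
  set F : ℂ → ℂ := fun z => a + Complex.log (g z) / (2*I*(ℓ:ℂ)) with hF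
  clear_value F
  have h2Iℓ : (2*I*(ℓ:ℂ)) ≠ 0 :=
    mul_ne_zero (mul_ne_zero two_ne_zero I_ne_zero) hℓ0'
  have habs2Iℓ : ‖2*I*(ℓ:ℂ)‖ = 2*ℓ := by
    rw [norm_mul, norm_mul, Complex.norm_two, Complex.norm_I, Complex.norm_real, Real.norm_eq_abs, abs_of_pos hℓ]
    ring
  have hu_le : ∀ z : ℂ, ‖z - a‖ ≤ ν/6 →
      ‖2*I*(z-a)*ℓ‖ ≤ Real.pi/3 := by
    intro z hz
    rw [hu_abs]
    calc 2*ℓ*‖z-a‖ ≤ 2*ℓ*(ν/6) :=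
        mul_le_mul_of_nonneg_left hz (by positivity)
      _ = Real.pi/3 := hπ3
  have hfix_iff : ∀ z : ℂ, ‖z - a‖ ≤ ν/6 → (φ z = 0 ↔ F z = z) := by
    intro z hz
    rw [hphi_iff z hz]
    constructor
    · intro h
      have hlogeq : 2*I*(z-a)*(ℓ:ℂ) = Complex.log (g z) :=
        aux_exp_eq_log (hu_le z hz) (hg1 z hz).2 h
      rw [hF]
      simp only
      rw [← hlogeq]
      field_simp
      ring
    · intro h
      have hlogeq : Complex.log (g z) = 2*I*(z-a)*(ℓ:ℂ) := by
        rw [hF] at h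
        simp only at h
        field_simp at h
        linear_combination h
      rw [← hlogeq, Complex.exp_log (hgne z hz)]
  have hlog_small : ∀ z : ℂ, ‖z - a‖ ≤ ν/6 →
      ‖Complex.log (g z)‖ ≤ 2 * ‖g z - 1‖ := by
    intro z hz
    have h1 := aux_log_lipschitz (hg1 z hz).2 (by norm_num : ‖(1:ℂ) - 1‖ ≤ 1/2)
    rw [Complex.log_one, sub_zero] at h1
    exact h1
  have hmaps : ∀ z : ℂ, ‖z - a‖ ≤ ν/6 → ‖F z - a‖ < ν/6 := by
    intro z hz
    have hFe : ‖F z - a‖ = ‖Complex.log (g z)‖ / (2*ℓ) := by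
      rw [hF]
      simp only
      rw [add_sub_cancel_left, norm_div, habs2Iℓ]
    have h1 : ‖Complex.log (g z)‖ ≤ 4*m/D := by
      have h0 := hlog_small z hz
      have h2 := (hg1 z hz).1
      calc ‖Complex.log (g z)‖ ≤ 2 * ‖g z - 1‖ := h0
        _ ≤ 2 * (2*m/D) := by linarith
        _ = 4*m/D := by ring
    have hlv : 0 < ℓ*ν := by positivity
    have h12 : 12*m + 2*(ℓ*ν) ≤ D*(ℓ*ν) := by
      have h3 := mul_le_mul_of_nonneg_right hDlv hlv.le
      have h4 : (12*m/(ℓ*ν) + 2)*(ℓ*ν) = 12*m + 2*(ℓ*ν) := by field_simp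
      rw [h4] at h3
      exact h3
    rw [hFe, div_lt_iff₀ (by positivity : (0:ℝ) < 2*ℓ)]
    calc ‖Complex.log (g z)‖ ≤ 4*m/D := h1
      _ < ν/6*(2*ℓ) := by
          rw [div_lt_iff₀ hD0]
          nlinarith
  have hlip : ∀ z₁ z₂ : ℂ, ‖z₁ - a‖ ≤ ν/6 → ‖z₂ - a‖ ≤ ν/6 →
      ‖F z₁ - F z₂‖ ≤ (1/2)*‖z₁ - z₂‖ := by
    intro z₁ z₂ h1 h2
    have hne1 := hzμne z₁ h1
    have hne2 := hzμne z₂ h2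
    have hgd : g z₁ - g z₂ = 2*μ*(z₂ - z₁)/((z₁-μ)*(z₂-μ)) := by
      rw [hg]
      simp only
      have hnum : 2*μ*(z₂-μ) - (z₁-μ)*(2*μ) = 2*μ*(z₂ - z₁) := by ring
      calc (1 + 2*μ/(z₁-μ)) - (1 + 2*μ/(z₂-μ)) = 2*μ/(z₁-μ) - 2*μ/(z₂-μ) := by ring
        _ = (2*μ*(z₂-μ) - (z₁-μ)*(2*μ))/((z₁-μ)*(z₂-μ)) := div_sub_div _ _ hne1 hne2
        _ = 2*μ*(z₂ - z₁)/((z₁-μ)*(z₂-μ)) := by rw [hnum]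
    have habs_gd : ‖g z₁ - g z₂‖ ≤ 2*m/(D*D) * ‖z₁ - z₂‖ := by
      rw [hgd, norm_div, norm_mul, norm_mul, norm_mul, Complex.norm_two]
      have e : ‖z₂ - z₁‖ = ‖z₁ - z₂‖ := by
        rw [← norm_neg]; ring_nf
      rw [e, ← hm]
      have hDD : D*D ≤ ‖z₁-μ‖ * ‖z₂-μ‖ :=
        mul_le_mul (hzμ z₁ h1) (hzμ z₂ h2) hD0.le (norm_nonneg _)
      have h5 := div_le_div₀ (by positivity) (le_refl (2*m*‖z₁ - z₂‖))
        (by positivity : (0:ℝ) < D*D) hDD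
      calc 2*m*‖z₁ - z₂‖ / (‖z₁-μ‖ * ‖z₂-μ‖)
          ≤ 2*m*‖z₁ - z₂‖ / (D*D) := h5
        _ = 2*m/(D*D) * ‖z₁ - z₂‖ := by ring
    have hFd : F z₁ - F z₂ = (Complex.log (g z₁) - Complex.log (g z₂))/(2*I*(ℓ:ℂ)) := by
      rw [hF]
      simp only
      field_simp
      ring
    have hll := aux_log_lipschitz (hg1 z₁ h1).2 (hg1 z₂ h2).2
    rw [hFd, norm_div, habs2Iℓ, div_le_iff₀ (by positivity : (0:ℝ) < 2*ℓ)]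
    have hkey : 4*m ≤ ℓ*(D*D) := by
      have h6 := mul_le_mul_of_nonneg_right hDl hℓ.le
      have h7 : (4*m/ℓ + 2)*ℓ = 4*m + 2*ℓ := by field_simp
      rw [h7] at h6
      nlinarith
    have hcoef : 4*m/(D*D) ≤ ℓ := by
      rw [div_le_iff₀ (by positivity : (0:ℝ) < D*D)]
      linarith [hkey]
    have h8 := mul_le_mul_of_nonneg_right hcoef (norm_nonneg (z₁ - z₂))
    calc ‖Complex.log (g z₁) - Complex.log (g z₂)‖
        ≤ 2 * ‖g z₁ - g z₂‖ := hll
      _ ≤ 2 * (2*m/(D*D) * ‖z₁ - z₂‖) := by linarith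
      _ = (4*m/(D*D)) * ‖z₁ - z₂‖ := by ring
      _ ≤ ℓ * ‖z₁ - z₂‖ := h8
      _ = 1/2*‖z₁ - z₂‖*(2*ℓ) := by ring
  -- Banach fixed point
  set s : Set ℂ := Metric.closedBall a (ν/6) with hs
  clear_value s
  have hmem_iff : ∀ z : ℂ, z ∈ s ↔ ‖z - a‖ ≤ ν/6 := by
    intro z
    rw [hs, Metric.mem_closedBall, Complex.dist_eq]
  have hsc : IsComplete s := by rw [hs]; exact Metric.isClosed_closedBall.isComplete
  have hsf : Set.MapsTo F s s := by
    intro z hz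
    exact (hmem_iff _).mpr (le_of_lt (hmaps z ((hmem_iff _).mp hz)))
  have hcontr : ContractingWith (1/2 : NNReal) (hsf.restrict F s s) := by
    constructor
    · exact NNReal.half_lt_self one_ne_zero
    · apply LipschitzWith.of_dist_le_mul
      rintro ⟨z₁, hz₁⟩ ⟨z₂, hz₂⟩
      have hd1 : dist (hsf.restrict F s s ⟨z₁, hz₁⟩) (hsf.restrict F s s ⟨z₂, hz₂⟩)
          = dist (F z₁) (F z₂) := rfl
      have hd2 : dist (⟨z₁, hz₁⟩ : s) (⟨z₂, hz₂⟩ : s) = dist z₁ z₂ := rfl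
      rw [hd1, hd2, Complex.dist_eq, Complex.dist_eq]
      have hc : ((1/2 : NNReal) : ℝ) = 1/2 := by norm_num
      rw [hc]
      exact hlip z₁ z₂ ((hmem_iff _).mp hz₁) ((hmem_iff _).mp hz₂)
  have ha_mem : a ∈ s := by
    rw [hmem_iff]
    simp
    positivity
  obtain ⟨z₀, hz₀s, hz₀fix, -, -⟩ :=
    hcontr.exists_fixedPoint' hsc hsf ha_mem (edist_ne_top _ _)
  have hz₀le : ‖z₀ - a‖ ≤ ν/6 := (hmem_iff _).mp hz₀s
  have hz₀lt : ‖z₀ - a‖ < ν/6 := by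
    have h1 := hmaps z₀ hz₀le
    rwa [hz₀fix] at h1
  refine ⟨?_, ?_, ?_⟩
  -- Part 1 : the circle estimate
  · intro z hz
    have hz' : ‖z - a‖ ≤ ν/6 := le_of_eq hz
    have hdiff : φ z - φ₀ z = -(μ * (Complex.exp (2*I*z*ℓ) + 1)) := by
      rw [hφ, hφ₀]; ring
    have hub : ‖φ z - φ₀ z‖ ≤ m*C := by
      rw [hdiff, norm_neg, norm_mul, ← hm]
      have h1 : ‖Complex.exp (2*I*z*ℓ) + 1‖ ≤ C := by
        rw [hexp_per z]
        have h2 : ‖Complex.exp (2*I*(z-a)*ℓ)‖ ≤ Real.exp (Real.pi/3) := by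
          rw [Complex.norm_exp]
          apply Real.exp_le_exp.mpr
          have h3 := Complex.abs_re_le_norm (2*I*(z-a)*ℓ)
          have h4 := hu_le z hz'
          have h5 : (2*I*((z:ℂ)-a)*(ℓ:ℂ)).re ≤ |(2*I*((z:ℂ)-a)*(ℓ:ℂ)).re| := le_abs_self _
          linarith
        calc ‖Complex.exp (2*I*(z-a)*ℓ) + 1‖
            ≤ ‖Complex.exp (2*I*(z-a)*ℓ)‖ + 1 := by
              simpa using norm_add_le (Complex.exp (2*I*(z-a)*ℓ)) 1
          _ ≤ Real.exp (Real.pi/3) + 1 := by linarith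
          _ = C := by rw [hC]
      exact mul_le_mul_of_nonneg_left h1 hm0
    have hlb : ((n:ℝ)*ν - ν/6)*(1/4) ≤ ‖φ₀ z‖ := by
      rw [hφ₀]
      simp only
      rw [norm_mul, hexp_per z]
      have h14 : 1/4 ≤ ‖Complex.exp (2*I*(z-a)*ℓ) - 1‖ := by
        apply aux_exp_lb
        rw [hu_abs, hz]
        exact hπ3
      have hzz := habs_z z hz'
      have hnn : (0:ℝ) ≤ (n:ℝ)*ν - ν/6 := by linarith
      exact mul_le_mul hzz h14 (by norm_num) (norm_nonneg _)
    have hmain : m*C < ((n:ℝ)*ν - ν/6)*(1/4) := by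
      have : 4*m*C + 2 + m ≤ (n:ℝ)*ν - ν/6 := by rw [hD] at hDC; linarith
      nlinarith
    linarith
  -- Part 2 : unique zero
  · refine ⟨z₀, ⟨hz₀lt, (hfix_iff z₀ hz₀le).mpr hz₀fix⟩, ?_⟩
    rintro z' ⟨hz'lt, hz'0⟩
    have hz'le : ‖z' - a‖ ≤ ν/6 := hz'lt.le
    have hfix' : F z' = z' := (hfix_iff z' hz'le).mp hz'0
    have hd := hlip z' z₀ hz'le hz₀le
    rw [hfix', hz₀fix] at hd
    have h0 : ‖z' - z₀‖ = 0 := by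
      linarith [norm_nonneg (z' - z₀)]
    have := norm_eq_zero.mp h0
    exact sub_eq_zero.mp this
  -- Part 3 : simple zero
  · intro z hzlt hz0
    have hzle : ‖z - a‖ ≤ ν/6 := hzlt.le
    have hne := hzμne z hzle
    have hE : Complex.exp (2*I*z*ℓ) = g z := by
      rw [hexp_per z]
      exact (hphi_iff z hzle).mp hz0
    have hd1 : HasDerivAt (fun w : ℂ => 2*I*w*(ℓ:ℂ)) (2*I*(ℓ:ℂ)) z := by
      simpa using ((hasDerivAt_id z).const_mul (2*I)).mul_const (ℓ:ℂ)
    have hd2 : HasDerivAt (fun w : ℂ => Complex.exp (2*I*w*ℓ))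
        (Complex.exp (2*I*z*ℓ) * (2*I*(ℓ:ℂ))) z := hd1.cexp
    have hd3 : HasDerivAt φ
        (Complex.exp (2*I*z*ℓ) + (z-μ)*(Complex.exp (2*I*z*ℓ)*(2*I*(ℓ:ℂ))) - 1) z := by
      rw [hφ]
      have h4 := (((hasDerivAt_id z).sub_const μ).mul hd2).sub
        ((hasDerivAt_id z).add_const μ)
      refine HasDerivAt.congr_deriv h4 ?_
      simp only [id_eq]
      ring
    have hderiv : deriv φ z
        = Complex.exp (2*I*z*ℓ) + (z-μ)*(Complex.exp (2*I*z*ℓ)*(2*I*(ℓ:ℂ))) - 1 :=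
      hd3.deriv
    have hval : deriv φ z = 2*μ/(z-μ) + 2*I*(ℓ:ℂ)*(z+μ) := by
      rw [hderiv, hE, hg]
      simp only
      field_simp
      ring
    rw [hval]
    intro hzero
    have h1 : ‖2*I*(ℓ:ℂ)*(z+μ)‖ = 2*ℓ*‖z+μ‖ := by
      rw [norm_mul, habs2Iℓ]
    have h2 : D ≤ ‖z + μ‖ := by
      have h3 := habs_z z hzle
      have h4 := aux_tri1 z (-μ)
      rw [sub_neg_eq_add, norm_neg, ← hm] at h4
      rw [hD]
      linarith
    have h3 : ‖2*μ/(z-μ)‖ ≤ 2*m/D := by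
      rw [norm_div, norm_mul, Complex.norm_two, ← hm]
      exact div_le_div₀ (by positivity) le_rfl hD0 (hzμ z hzle)
    have h4 : ‖2*I*(ℓ:ℂ)*(z+μ)‖ = ‖2*μ/(z-μ)‖ := by
      have he : 2*I*(ℓ:ℂ)*(z+μ) = -(2*μ/(z-μ)) := by
        linear_combination hzero
      rw [he, norm_neg]
    have h5 : 2*ℓ*D ≤ 2*m/D := by
      calc 2*ℓ*D ≤ 2*ℓ*‖z+μ‖ := by nlinarith
        _ = ‖2*I*(ℓ:ℂ)*(z+μ)‖ := h1.symm
        _ = ‖2*μ/(z-μ)‖ := h4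
        _ ≤ 2*m/D := h3
    have h6 : 2*ℓ*D*D ≤ 2*m := by
      have h7 := mul_le_mul_of_nonneg_right h5 hD0.le
      rwa [div_mul_cancel₀ _ (ne_of_gt hD0)] at h7
    have h8 := mul_le_mul_of_nonneg_right hDml hℓ.le
    have h9 : (m/ℓ + 2)*ℓ = m + 2*ℓ := by field_simp
    rw [h9] at h8
    nlinarith
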